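/- Let f : [a,b] → ℝ and let Z ⊆ [a,b] be a set of Lebesgue measure zero such that the symmetric upper Dini derivative D̄f(x) := limsup_{y→x} |(f(y)−f(x))/(y−x)| is finite at every x ∈ Z. Then f has negligible variation on Z. -/

import Mathlib

open Set MeasureTheory Filter
open scoped Classical

/-- A tagged partition of `[a, b]`: division points `t 0 = a ≤ t 1 ≤ ⋯ ≤ t n = b`
together with tags `tag i ∈ [t i, t (i+1)]`. -/
structure TaggedPartition (a b : ℝ) where
  n : ℕ
  t : ℕ → ℝ
  tag : ℕ → ℝ
  t_first : t 0 = a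
  t_last : t n = b
  t_mono : ∀ i < n, t i ≤ t (i + 1)
  tag_mem : ∀ i < n, tag i ∈ Set.Icc (t i) (t (i + 1))

/-- A tagged partition is subordinate to a gauge `δ` if each interval is contained in the
open ball of radius `δ` around its tag. -/
def TaggedPartition.Subordinate {a b : ℝ} (P : TaggedPartition a b) (δ : ℝ → ℝ) : Prop :=
  ∀ i < P.n,
    Set.Icc (P.t i) (P.t (i + 1)) ⊆ Set.Ioo (P.tag i - δ (P.tag i)) (P.tag i + δ (P.tag i))

/-- A gauge on `[a, b]` is positive on `[a, b]`. -/
def IsGauge (a b : ℝ) (δ : ℝ → ℝ) : Prop := ∀ x ∈ Set.Icc a b, 0 < δ x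

/-- `f` has negligible variation on `E ⊆ [a, b]`. -/

def NegVar (a b : ℝ) (f : ℝ → ℝ) (E : Set ℝ) : Prop :=
  ∀ ε > 0, ∃ δ : ℝ → ℝ, IsGauge a b δ ∧ ∀ P : TaggedPartition a b, P.Subordinate δ →
    (∑ i ∈ Finset.range P.n,
      if P.tag i ∈ E then |f (P.t (i + 1)) - f (P.t i)| else 0) < ε

/-- `f` has negligible conditional variation on `E ⊆ [a, b]`. -/

def NegCondVar (a b : ℝ) (f : ℝ → ℝ) (E : Set ℝ) : Prop :=
  ∀ ε > 0, ∃ δ : ℝ → ℝ, IsGauge a b δ ∧ ∀ P : TaggedPartition a b, P.Subordinate δ →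
    |∑ i ∈ Finset.range P.n,
      if P.tag i ∈ E then f (P.t (i + 1)) - f (P.t i) else 0| < ε

/-- `I` is the Henstock–Kurzweil integral of `h` on `[a, b]` (with `a ≤ b`). -/
def HKIntegralTo (a b : ℝ) (h : ℝ → ℝ) (I : ℝ) : Prop :=
  ∀ ε > 0, ∃ δ : ℝ → ℝ, IsGauge a b δ ∧ ∀ P : TaggedPartition a b, P.Subordinate δ →
    |(∑ i ∈ Finset.range P.n, h (P.tag i) * (P.t (i + 1) - P.t i)) - I| < ε

/-- Oriented HK integral: `(HK)∫_a^b h = I`, with the convention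
`(HK)∫_b^a h = -(HK)∫_a^b h`. -/
def HKIntegral (a b : ℝ) (h : ℝ → ℝ) (I : ℝ) : Prop :=
  if a ≤ b then HKIntegralTo a b h I else HKIntegralTo b a h (-I)


lemma mono_aux (n : ℕ) (t : ℕ → ℝ) (h : ∀ i < n, t i ≤ t (i+1)) :
    ∀ i j, i ≤ j → j ≤ n → t i ≤ t j := by
  intro i j hij hjn
  induction j with
  | zero => simp_all
  | succ k ih =>
    rcases Nat.lt_succ_iff_lt_or_eq.mp (Nat.lt_succ_of_le hij) with h'|h'
    · exact (ih (Nat.lt_succ_iff.mp h') (le_trans (Nat.le_succ k) hjn)).trans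
        (h k (Nat.lt_of_succ_le hjn))
    · exact h' ▸ le_refl _

lemma geom_aux (m : ℕ) : ∑ n ∈ Finset.range m, ((1:ℝ)/2)^(n+1) = 1 - (1/2)^m := by
  induction m with
  | zero => simp
  | succ k ih => rw [Finset.sum_range_succ, ih]; ring

lemma length_sum_le (m : ℕ) (t : ℕ → ℝ) (ht : ∀ i < m, t i ≤ t (i+1)) (F : Finset ℕ)
    (hF : F ⊆ Finset.range m) (U : Set ℝ) (hU : volume U ≠ ⊤)
    (hsub : ∀ i ∈ F, Set.Ico (t i) (t (i+1)) ⊆ U) :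
    ∑ i ∈ F, (t (i+1) - t i) ≤ (volume U).toReal := by
  have hlen : ∀ i ∈ F, 0 ≤ t (i+1) - t i := fun i hi =>
    sub_nonneg.mpr (ht i (Finset.mem_range.mp (hF hi)))
  have key2 : ∀ i ∈ F, ∀ j ∈ F, i < j →
      Disjoint (Set.Ico (t i) (t (i+1))) (Set.Ico (t j) (t (j+1))) := by
    intro i hi j hj hlt
    have hle : t (i+1) ≤ t j :=
      mono_aux m t ht (i+1) j hlt (Nat.le_of_lt (Finset.mem_range.mp (hF hj)))
    rw [Set.disjoint_left]
    rintro x ⟨_, h2⟩ ⟨h3, _⟩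
    linarith
  have hdisj : (F : Set ℕ).PairwiseDisjoint (fun i => Set.Ico (t i) (t (i+1))) := by
    intro i hi j hj hij
    rcases hij.lt_or_gt with h'|h'
    · exact key2 i hi j hj h'
    · exact (key2 j hj i hi h').symm
  have hmeas : volume (⋃ i ∈ F, Set.Ico (t i) (t (i+1))) =
      ∑ i ∈ F, volume (Set.Ico (t i) (t (i+1))) :=
    measure_biUnion_finset hdisj (fun i _ => measurableSet_Ico)
  have hsub2 : (⋃ i ∈ F, Set.Ico (t i) (t (i+1))) ⊆ U := by
    simpa using fun i hi => hsub i hi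
  have key : ∑ i ∈ F, ENNReal.ofReal (t (i+1) - t i) ≤ volume U := by
    calc ∑ i ∈ F, ENNReal.ofReal (t (i+1) - t i)
        = ∑ i ∈ F, volume (Set.Ico (t i) (t (i+1))) := by
          refine Finset.sum_congr rfl fun i _ => ?_
          rw [Real.volume_Ico]
      _ = volume (⋃ i ∈ F, Set.Ico (t i) (t (i+1))) := hmeas.symm
      _ ≤ volume U := measure_mono hsub2
  rw [← ENNReal.ofReal_sum_of_nonneg hlen] at key
  exact (ENNReal.ofReal_le_iff_le_toReal hU).mp key


theorem stmt4 (a b : ℝ) (hab : a ≤ b) (f : ℝ → ℝ) (Z : Set ℝ) (hZ : Z ⊆ Set.Icc a b)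
    (hnull : MeasureTheory.volume Z = 0)
    (hdini : ∀ x ∈ Z, ∃ M : ℝ, ∀ᶠ y in nhdsWithin x {x}ᶜ, |(f y - f x) / (y - x)| ≤ M) :
    NegVar a b f Z := by
  intro ε hε
  set Zn : ℕ → Set ℝ := fun n =>
    {x | x ∈ Z ∧ ∀ y : ℝ, |y - x| ≤ 1/((n:ℝ)+1) → |f y - f x| ≤ ((n:ℝ)+1) * |y - x|} with hZndef
  -- every point of Z is in some Zn
  have hcov : ∀ x ∈ Z, ∃ n : ℕ, x ∈ Zn n := by
    intro x hx
    obtain ⟨M, hM⟩ := hdini x hx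
    rw [eventually_nhdsWithin_iff] at hM
    obtain ⟨rr, hrr, h⟩ := Metric.eventually_nhds_iff.mp hM
    obtain ⟨n₁, hn₁⟩ := exists_nat_one_div_lt hrr
    refine ⟨max n₁ ⌈M⌉₊, hx, ?_⟩
    intro y hy
    by_cases hyx : y = x
    · simp [hyx]
    · have hle : (1:ℝ)/(((max n₁ ⌈M⌉₊ : ℕ):ℝ)+1) ≤ 1/((n₁:ℝ)+1) := by
        apply one_div_le_one_div_of_le (by positivity)
        have : (n₁:ℝ) ≤ ((max n₁ ⌈M⌉₊ : ℕ):ℝ) := by exact_mod_cast le_max_left _ _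
        linarith
      have hdist : dist y x < rr := by
        rw [Real.dist_eq]
        exact lt_of_le_of_lt (hy.trans hle) hn₁
      have hq := h hdist (by simpa using hyx)
      rw [abs_div] at hq
      have h0 : 0 < |y - x| := abs_pos.mpr (sub_ne_zero.mpr hyx)
      have hM' : M ≤ ((max n₁ ⌈M⌉₊ : ℕ):ℝ) + 1 := by
        refine le_trans (Nat.le_ceil M) ?_
        have : (⌈M⌉₊ : ℝ) ≤ ((max n₁ ⌈M⌉₊ : ℕ):ℝ) := by exact_mod_cast le_max_right _ _
        linarith
      have := (div_le_iff₀ h0).mp hq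
      calc |f y - f x| ≤ M * |y - x| := this
        _ ≤ (((max n₁ ⌈M⌉₊ : ℕ):ℝ)+1) * |y - x| := by
            apply mul_le_mul_of_nonneg_right hM' (abs_nonneg _)
  -- open supersets of small measure
  have hUex : ∀ n : ℕ, ∃ U : Set ℝ, Zn n ⊆ U ∧ IsOpen U ∧
      volume U < ENNReal.ofReal (ε / (((n:ℝ)+1) * 2^(n+2))) := by
    intro n
    have hZnnull : volume (Zn n) = 0 :=
      measure_mono_null (fun x hx => hx.1) hnull
    have hpos : (0:ENNReal) < ENNReal.ofReal (ε / (((n:ℝ)+1) * 2^(n+2))) := by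
      apply ENNReal.ofReal_pos.mpr
      positivity
    obtain ⟨U, hU1, hU2, hU3⟩ := Set.exists_isOpen_lt_of_lt (Zn n) _ (hZnnull ▸ hpos)
    exact ⟨U, hU1, hU2, hU3⟩
  choose U hUsub hUopen hUlt using hUex
  -- least index
  let N : ℝ → ℕ := fun x => if hx : x ∈ Z then Nat.find (hcov x hx) else 0
  have hN : ∀ x ∈ Z, x ∈ Zn (N x) := by
    intro x hx
    simp only [N, dif_pos hx]
    exact Nat.find_spec (hcov x hx)
  -- ball radii
  have hball : ∀ x : ℝ, ∃ r > 0, x ∈ Z → Metric.ball x r ⊆ U (N x) := by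
    intro x
    by_cases hx : x ∈ Z
    · obtain ⟨rr, hrr, hb⟩ := Metric.isOpen_iff.mp (hUopen (N x)) x (hUsub _ (hN x hx))
      exact ⟨rr, hrr, fun _ => hb⟩
    · exact ⟨1, one_pos, fun h => absurd h hx⟩
  choose r hrpos hrU using hball
  refine ⟨fun x => min (1/((N x : ℝ)+1)) (r x), ?_, ?_⟩
  · intro x _
    exact lt_min (by positivity) (hrpos x)
  · intro P hP
    set g : ℕ → ℝ := fun i => |f (P.t (i+1)) - f (P.t i)| with hg
    set s : Finset ℕ := (Finset.range P.n).filter (fun i => P.tag i ∈ Z) with hs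
    have hrw : (∑ i ∈ Finset.range P.n,
        if P.tag i ∈ Z then |f (P.t (i + 1)) - f (P.t i)| else 0) = ∑ i ∈ s, g i :=
      (Finset.sum_filter _ _).symm
    rw [hrw]
    -- facts about indices in s
    have hsmem : ∀ i ∈ s, i < P.n ∧ P.tag i ∈ Z := by
      intro i hi
      rw [hs, Finset.mem_filter, Finset.mem_range] at hi
      exact hi
    -- endpoints are close to the tag and interval inside U
    have hclose : ∀ i ∈ s, |P.t i - P.tag i| ≤ 1/((N (P.tag i) : ℝ)+1) ∧
        |P.t (i+1) - P.tag i| ≤ 1/((N (P.tag i) : ℝ)+1) ∧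
        Set.Icc (P.t i) (P.t (i+1)) ⊆ U (N (P.tag i)) := by
      intro i hi
      obtain ⟨hin, hz⟩ := hsmem i hi
      have hmem := P.tag_mem i hin
      have hsubball : Set.Icc (P.t i) (P.t (i+1)) ⊆
          Metric.ball (P.tag i) (min (1/((N (P.tag i) : ℝ)+1)) (r (P.tag i))) := by
        intro y hy
        have := hP i hin hy
        rw [Real.ball_eq_Ioo]
        exact this
      have hl : P.t i ∈ Metric.ball (P.tag i) (min (1/((N (P.tag i) : ℝ)+1)) (r (P.tag i))) :=
        hsubball ⟨le_refl _, P.t_mono i hin⟩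
      have hr' : P.t (i+1) ∈ Metric.ball (P.tag i) (min (1/((N (P.tag i) : ℝ)+1)) (r (P.tag i))) :=
        hsubball ⟨P.t_mono i hin, le_refl _⟩
      rw [Metric.mem_ball, Real.dist_eq] at hl hr'
      refine ⟨le_of_lt (lt_of_lt_of_le hl (min_le_left _ _)),
        le_of_lt (lt_of_lt_of_le hr' (min_le_left _ _)), ?_⟩
      refine Set.Subset.trans hsubball (Set.Subset.trans ?_ (hrU _ hz))
      exact Metric.ball_subset_ball (min_le_right _ _)
    -- term bound
    have hterm : ∀ i ∈ s, g i ≤ ((N (P.tag i) : ℝ)+1) * (P.t (i+1) - P.t i) := by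
      intro i hi
      obtain ⟨hin, hz⟩ := hsmem i hi
      obtain ⟨hc1, hc2, _⟩ := hclose i hi
      have hzn := hN _ hz
      have h1 := hzn.2 (P.t i) hc1
      have h2 := hzn.2 (P.t (i+1)) hc2
      have hmem := P.tag_mem i hin
      rw [abs_of_nonpos (by linarith [hmem.1] : P.t i - P.tag i ≤ 0)] at h1
      rw [abs_of_nonneg (by linarith [hmem.2] : (0:ℝ) ≤ P.t (i+1) - P.tag i)] at h2
      have tri : |f (P.t (i+1)) - f (P.t i)| ≤
          |f (P.t (i+1)) - f (P.tag i)| + |f (P.t i) - f (P.tag i)| := by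
        have := abs_sub_le (f (P.t (i+1))) (f (P.tag i)) (f (P.t i))
        rwa [abs_sub_comm (f (P.tag i)) (f (P.t i))] at this
      calc g i ≤ |f (P.t (i+1)) - f (P.tag i)| + |f (P.t i) - f (P.tag i)| := tri
        _ ≤ ((N (P.tag i) : ℝ)+1) * (P.t (i+1) - P.tag i) +
            ((N (P.tag i) : ℝ)+1) * -(P.t i - P.tag i) := by
            apply add_le_add h2 h1
        _ = ((N (P.tag i) : ℝ)+1) * (P.t (i+1) - P.t i) := by ring
    -- group by N value
    set Nt : ℕ → ℕ := fun i => N (P.tag i) with hNt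
    set T : Finset ℕ := s.image Nt with hT
    have hfib : ∑ n ∈ T, ∑ i ∈ s.filter (fun i => Nt i = n), g i = ∑ i ∈ s, g i :=
      Finset.sum_fiberwise_of_maps_to (fun i hi => Finset.mem_image_of_mem Nt hi) g
    rw [← hfib]
    -- bound each fiber
    have hfiber : ∀ n ∈ T, ∑ i ∈ s.filter (fun i => Nt i = n), g i ≤ (ε/2) * ((1:ℝ)/2)^(n+1) := by
      intro n hn
      set F : Finset ℕ := s.filter (fun i => Nt i = n) with hF
      have hFs : ∀ i ∈ F, i ∈ s ∧ Nt i = n := fun i hi => Finset.mem_filter.mp hi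
      have step1 : ∑ i ∈ F, g i ≤ ((n:ℝ)+1) * ∑ i ∈ F, (P.t (i+1) - P.t i) := by
        rw [Finset.mul_sum]
        apply Finset.sum_le_sum
        intro i hi
        obtain ⟨his, hNi⟩ := hFs i hi
        have := hterm i his
        rw [hNt] at hNi
        rw [← hNi]
        exact this
      have hUne : volume (U n) ≠ ⊤ := ne_top_of_lt (hUlt n)
      have step2 : ∑ i ∈ F, (P.t (i+1) - P.t i) ≤ (volume (U n)).toReal := by
        apply length_sum_le P.n P.t P.t_mono F
        · intro i hi
          rw [hF] at hi
          have := (hFs i hi).1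
          rw [hs, Finset.mem_filter] at this
          exact Finset.mem_range.mpr (Finset.mem_range.mp this.1)
        · exact hUne
        · intro i hi
          obtain ⟨his, hNi⟩ := hFs i hi
          obtain ⟨_, _, hsub⟩ := hclose i his
          rw [hNt] at hNi
          rw [← hNi]
          exact Set.Subset.trans Set.Ico_subset_Icc_self hsub
      have step3 : (volume (U n)).toReal ≤ ε / (((n:ℝ)+1) * 2^(n+2)) := by
        apply ENNReal.toReal_le_of_le_ofReal (by positivity) (le_of_lt (hUlt n))
      have hn1 : (0:ℝ) < (n:ℝ)+1 := by positivity
      calc ∑ i ∈ F, g i ≤ ((n:ℝ)+1) * ∑ i ∈ F, (P.t (i+1) - P.t i) := step1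
        _ ≤ ((n:ℝ)+1) * (ε / (((n:ℝ)+1) * 2^(n+2))) := by
            apply mul_le_mul_of_nonneg_left (step2.trans step3) (le_of_lt hn1)
        _ = (ε/2) * ((1:ℝ)/2)^(n+1) := by
            field_simp
            rw [show (2:ℝ)^(n+2) = 2 * 2^(n+1) by ring, mul_assoc, ← mul_pow]; norm_num
    -- sum up
    have hTsub : T ⊆ Finset.range (T.sup id + 1) := by
      intro n hn
      exact Finset.mem_range.mpr (Nat.lt_succ_of_le (Finset.le_sup (f := id) hn))
    calc ∑ n ∈ T, ∑ i ∈ s.filter (fun i => Nt i = n), g i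
        ≤ ∑ n ∈ T, (ε/2) * ((1:ℝ)/2)^(n+1) := Finset.sum_le_sum hfiber
      _ = (ε/2) * ∑ n ∈ T, ((1:ℝ)/2)^(n+1) := by rw [Finset.mul_sum]
      _ ≤ (ε/2) * ∑ n ∈ Finset.range (T.sup id + 1), ((1:ℝ)/2)^(n+1) := by
          apply mul_le_mul_of_nonneg_left _ (by positivity)
          apply Finset.sum_le_sum_of_subset_of_nonneg hTsub
          intro i _ _
          positivity
      _ = (ε/2) * (1 - (1/2)^(T.sup id + 1)) := by rw [geom_aux]
      _ ≤ (ε/2) * 1 := by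
          apply mul_le_mul_of_nonneg_left _ (by positivity)
          have : (0:ℝ) < (1/2)^(T.sup id + 1) := by positivity
          linarith
      _ < ε := by linarith
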